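/- Let Z be discrete with finitely many positive-probability levels, π ∈ (0,1), γ₀, γ₁ ∈ R^d, and define σ²_SL = Σ_z P(Z=z)[π·Var(O_{z1}|Z=z) + (1−π)·Var(O_{z0}|Z=z)] and σ²_CSL = σ²_SL − π(1−π)(γ₁+γ₀)^T E[Var(X|Z)] (γ₁+γ₀), where γ_j = (E[Var(X|Z)])^{-1} E[Cov(X, O_{zj} | Z)] and E[Var(X|Z)] is positive definite. Then σ²_CSL ≤ σ²_SL, with equality if and only if γ₁ + γ₀ = 0, and moreover σ²_CSL = Σ_z P(Z=z)[π·Var(O_{z1} − X^Tγ₁|Z=z) + (1−π)·Var(O_{z0} − X^Tγ₀|Z=z)] + (πγ₁−(1−π)γ₀)^T E[Var(X|Z)](πγ₁−(1−π)γ₀). -/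

import Mathlib

open MeasureTheory ProbabilityTheory Filter Matrix Set
open scoped BigOperators NNReal Topology ProbabilityTheory

noncomputable def evar {Ω : Type*} [MeasurableSpace Ω] (μ : Measure Ω) (f : Ω → ℝ) : ℝ :=
  ∫ ω, (f ω - ∫ x, f x ∂μ) ^ 2 ∂μ

noncomputable def ecov {Ω : Type*} [MeasurableSpace Ω] (μ : Measure Ω) (f g : Ω → ℝ) : ℝ :=
  ∫ ω, (f ω - ∫ x, f x ∂μ) * (g ω - ∫ x, g x ∂μ) ∂μ

noncomputable def covVec {Ω : Type*} [MeasurableSpace Ω] (μ : Measure Ω) {d : ℕ}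
    (X : Ω → Fin d → ℝ) (f : Ω → ℝ) : Fin d → ℝ :=
  fun k => ecov μ (fun ω => X ω k) f

noncomputable def covMat {Ω : Type*} [MeasurableSpace Ω] (μ : Measure Ω) {d : ℕ}
    (X : Ω → Fin d → ℝ) : Matrix (Fin d) (Fin d) ℝ :=
  Matrix.of fun k l => ecov μ (fun ω => X ω k) (fun ω => X ω l)

/- ### auxiliary lemmas -/

section Aux

variable {Ω : Type*} [MeasurableSpace Ω] {ν : Measure Ω}

lemma aux_integrable_mul {f g : Ω → ℝ} (hf : MemLp f 2 ν) (hg : MemLp g 2 ν) :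
    Integrable (fun ω => f ω * g ω) ν := by
  have : MemLp (f • g) 1 ν := hg.smul hf (hpqr := ⟨by
    rw [inv_one]; norm_num [ENNReal.inv_two_add_inv_two]⟩)
  exact memLp_one_iff_integrable.mp this

lemma ecov_comm (f g : Ω → ℝ) : ecov ν f g = ecov ν g f := by
  simp [ecov, mul_comm]

lemma evar_eq_ecov (f : Ω → ℝ) : evar ν f = ecov ν f f := by
  simp [evar, ecov, pow_two]

lemma ecov_sum_right [IsProbabilityMeasure ν] {d : ℕ} (f : Ω → ℝ) (X : Ω → Fin d → ℝ)
    (γ : Fin d → ℝ) (hf : MemLp f 2 ν) (hX : ∀ k, MemLp (fun ω => X ω k) 2 ν) :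
    ecov ν f (fun ω => ∑ k, X ω k * γ k) = ∑ k, γ k * ecov ν f (fun ω => X ω k) := by
  have hfc : MemLp (fun ω => f ω - ∫ x, f x ∂ν) 2 ν := hf.sub (memLp_const _)
  have hXc : ∀ k, MemLp (fun ω => X ω k - ∫ x, X x k ∂ν) 2 ν :=
    fun k => (hX k).sub (memLp_const _)
  have hint : ∀ k : Fin d, Integrable
      (fun ω => (f ω - ∫ x, f x ∂ν) * (X ω k - ∫ x, X x k ∂ν)) ν :=
    fun k => aux_integrable_mul hfc (hXc k)
  have hm : (∫ x, ∑ k, X x k * γ k ∂ν) = ∑ k, (∫ x, X x k ∂ν) * γ k := by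
    rw [integral_finset_sum _ (fun k _ => ((hX k).integrable one_le_two).mul_const _)]
    simp [integral_mul_const]
  unfold ecov
  rw [hm]
  calc ∫ ω, (f ω - ∫ x, f x ∂ν) * (∑ k, X ω k * γ k - ∑ k, (∫ x, X x k ∂ν) * γ k) ∂ν
      = ∫ ω, ∑ k, γ k * ((f ω - ∫ x, f x ∂ν) * (X ω k - ∫ x, X x k ∂ν)) ∂ν := by
        apply integral_congr_ae; filter_upwards with ω
        rw [← Finset.sum_sub_distrib, Finset.mul_sum]
        exact Finset.sum_congr rfl fun k _ => by ring
    _ = ∑ k, γ k * ecov ν f (fun ω => X ω k) := by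
        rw [integral_finset_sum _ (fun k _ => (hint k).const_mul _)]
        exact Finset.sum_congr rfl fun k _ => integral_const_mul _ _

lemma evar_sub [IsProbabilityMeasure ν] (f g : Ω → ℝ)
    (hf : MemLp f 2 ν) (hg : MemLp g 2 ν) :
    evar ν (fun ω => f ω - g ω) = evar ν f - 2 * ecov ν f g + evar ν g := by
  have hfi : Integrable f ν := hf.integrable one_le_two
  have hgi : Integrable g ν := hg.integrable one_le_two
  have hfc : MemLp (fun ω => f ω - ∫ x, f x ∂ν) 2 ν := hf.sub (memLp_const _)
  have hgc : MemLp (fun ω => g ω - ∫ x, g x ∂ν) 2 ν := hg.sub (memLp_const _)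
  have h11 := aux_integrable_mul hfc hfc
  have h12 := aux_integrable_mul hfc hgc
  have h22 := aux_integrable_mul hgc hgc
  have hm : (∫ x, (f x - g x) ∂ν) = (∫ x, f x ∂ν) - ∫ x, g x ∂ν := integral_sub hfi hgi
  unfold evar ecov
  rw [hm]
  have hsub : Integrable (fun ω => (f ω - ∫ x, f x ∂ν) * (f ω - ∫ x, f x ∂ν)
      - 2 * ((f ω - ∫ x, f x ∂ν) * (g ω - ∫ x, g x ∂ν))) ν := h11.sub (h12.const_mul 2)
  calc ∫ ω, (f ω - g ω - ((∫ x, f x ∂ν) - ∫ x, g x ∂ν)) ^ 2 ∂ν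
      = ∫ ω, ((f ω - ∫ x, f x ∂ν) * (f ω - ∫ x, f x ∂ν)
          - 2 * ((f ω - ∫ x, f x ∂ν) * (g ω - ∫ x, g x ∂ν))
          + (g ω - ∫ x, g x ∂ν) * (g ω - ∫ x, g x ∂ν)) ∂ν := by
        apply integral_congr_ae; filter_upwards with ω; ring
    _ = (∫ ω, (f ω - ∫ x, f x ∂ν) * (f ω - ∫ x, f x ∂ν) ∂ν)
          - 2 * (∫ ω, (f ω - ∫ x, f x ∂ν) * (g ω - ∫ x, g x ∂ν) ∂ν)
          + ∫ ω, (g ω - ∫ x, g x ∂ν) * (g ω - ∫ x, g x ∂ν) ∂ν := by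
        rw [integral_add hsub h22,
          integral_sub h11 (h12.const_mul 2), integral_const_mul]
    _ = _ := by
        simp only [pow_two]

/-- main per-stratum identity -/
lemma evar_sub_lin [IsProbabilityMeasure ν] {d : ℕ} (O : Ω → ℝ) (X : Ω → Fin d → ℝ)
    (γ : Fin d → ℝ) (hO : MemLp O 2 ν) (hX : ∀ k, MemLp (fun ω => X ω k) 2 ν) :
    evar ν (fun ω => O ω - ∑ k, X ω k * γ k)
      = evar ν O - 2 * (γ ⬝ᵥ covVec ν X O) + γ ⬝ᵥ (covMat ν X).mulVec γ := by
  have hL : MemLp (fun ω => ∑ k, X ω k * γ k) 2 ν := by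
    have h' : (fun ω => ∑ k, X ω k * γ k) = ∑ k : Fin d, (fun ω => X ω k * γ k) := by
      funext ω; simp
    rw [h']
    exact memLp_finset_sum' _
      (fun k _ => by simpa [mul_comm] using (hX k).const_mul (γ k))
  have e1 : ecov ν O (fun ω => ∑ k, X ω k * γ k) = γ ⬝ᵥ covVec ν X O := by
    rw [ecov_sum_right O X γ hO hX]
    simp only [dotProduct, covVec]
    exact Finset.sum_congr rfl fun k _ => by rw [ecov_comm]
  have e2 : evar ν (fun ω => ∑ k, X ω k * γ k) = γ ⬝ᵥ (covMat ν X).mulVec γ := by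
    rw [evar_eq_ecov, ecov_sum_right _ X γ hL hX]
    simp only [dotProduct, Matrix.mulVec, covMat]
    refine Finset.sum_congr rfl fun k _ => ?_
    rw [ecov_comm, ecov_sum_right _ X γ (hX k) hX, Finset.mul_sum, Finset.mul_sum]
    refine Finset.sum_congr rfl fun l _ => ?_
    simp only [Matrix.of_apply, dotProduct]
    ring
  rw [evar_sub O _ hO hL, e1, e2]

lemma dot_sum_smul {d : ℕ} {ι : Type*} [Fintype ι] (γ : Fin d → ℝ) (p : ι → ℝ)
    (w : ι → Fin d → ℝ) :
    γ ⬝ᵥ (∑ z, p z • w z) = ∑ z, p z * (γ ⬝ᵥ w z) := by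
  simp only [dotProduct, Finset.sum_apply, Pi.smul_apply, smul_eq_mul, Finset.mul_sum]
  rw [Finset.sum_comm]
  exact Finset.sum_congr rfl fun z _ => Finset.sum_congr rfl fun k _ => by ring

lemma dot_sum_smul_mat {d : ℕ} {ι : Type*} [Fintype ι] (γ δ : Fin d → ℝ) (p : ι → ℝ)
    (M : ι → Matrix (Fin d) (Fin d) ℝ) :
    γ ⬝ᵥ (∑ z, p z • M z).mulVec δ = ∑ z, p z * (γ ⬝ᵥ (M z).mulVec δ) := by
  have h : (∑ z, p z • M z).mulVec δ = ∑ z, p z • ((M z).mulVec δ) := by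
    ext k
    simp only [Matrix.mulVec, dotProduct, Finset.sum_apply, Matrix.sum_apply,
      Matrix.smul_apply, Pi.smul_apply, smul_eq_mul, Finset.sum_mul]
    rw [Finset.sum_comm]
    exact Finset.sum_congr rfl fun z _ => by
      rw [Finset.mul_sum]; exact Finset.sum_congr rfl fun l _ => by ring
  rw [h, dot_sum_smul]

end Aux

theorem stmt14 {Ω ι : Type*} [MeasurableSpace Ω] [MeasurableSpace ι]
    [MeasurableSingletonClass ι] [Fintype ι]
    (μ : Measure Ω) [IsProbabilityMeasure μ] {d : ℕ}
    (X : Ω → Fin d → ℝ) (O₁ O₀ : ι → Ω → ℝ) (Z : Ω → ι)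
    (hX : MemLp X 2 μ) (hO₁ : ∀ z, MemLp (O₁ z) 2 μ) (hO₀ : ∀ z, MemLp (O₀ z) 2 μ)
    (hZ : Measurable Z) (hpos : ∀ z, 0 < μ (Z ⁻¹' {z}))
    (π : ℝ) (hπ : 0 < π) (hπ1 : π < 1)
    (A : Matrix (Fin d) (Fin d) ℝ)
    (hA : A = ∑ z, (μ (Z ⁻¹' {z})).toReal • covMat (μ[|Z ⁻¹' {z}]) X)
    (hApos : A.PosDef)
    (γ₁ γ₀ : Fin d → ℝ)
    (hγ₁ : γ₁ = A⁻¹.mulVec (∑ z, (μ (Z ⁻¹' {z})).toReal • covVec (μ[|Z ⁻¹' {z}]) X (O₁ z)))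
    (hγ₀ : γ₀ = A⁻¹.mulVec (∑ z, (μ (Z ⁻¹' {z})).toReal • covVec (μ[|Z ⁻¹' {z}]) X (O₀ z)))
    (σSL2 σCSL2 : ℝ)
    (hσSL2 : σSL2 = ∑ z, (μ (Z ⁻¹' {z})).toReal *
      (π * evar (μ[|Z ⁻¹' {z}]) (O₁ z) + (1 - π) * evar (μ[|Z ⁻¹' {z}]) (O₀ z)))
    (hσCSL2 : σCSL2 = σSL2
      - π * (1 - π) * ((γ₁ + γ₀) ⬝ᵥ A.mulVec (γ₁ + γ₀))) :
    σCSL2 ≤ σSL2 ∧ (σCSL2 = σSL2 ↔ γ₁ + γ₀ = 0) ∧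
    σCSL2 = (∑ z, (μ (Z ⁻¹' {z})).toReal *
        (π * evar (μ[|Z ⁻¹' {z}]) (fun ω => O₁ z ω - ∑ k, X ω k * γ₁ k)
          + (1 - π) * evar (μ[|Z ⁻¹' {z}]) (fun ω => O₀ z ω - ∑ k, X ω k * γ₀ k)))
      + (π • γ₁ - (1 - π) • γ₀) ⬝ᵥ A.mulVec (π • γ₁ - (1 - π) • γ₀) := by
  -- notation
  set s : ι → Set Ω := fun z => Z ⁻¹' {z} with hs
  have hπ1' : 0 < π * (1 - π) := mul_pos hπ (by linarith)
  -- positivity facts about A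
  have hQnonneg : 0 ≤ (γ₁ + γ₀) ⬝ᵥ A.mulVec (γ₁ + γ₀) := by
    have := hApos.posSemidef.dotProduct_mulVec_nonneg (γ₁ + γ₀)
    simpa using this
  have hQiff : (γ₁ + γ₀) ⬝ᵥ A.mulVec (γ₁ + γ₀) = 0 ↔ γ₁ + γ₀ = 0 := by
    constructor
    · intro h
      by_contra hne
      have := hApos.dotProduct_mulVec_pos hne
      simp only [star_trivial] at this
      exact absurd h (ne_of_gt this)
    · intro h; simp [h]
  refine ⟨?_, ?_, ?_⟩
  · rw [hσCSL2]
    nlinarith [mul_nonneg hπ1'.le hQnonneg]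
  · rw [hσCSL2]
    constructor
    · intro h
      have : π * (1 - π) * ((γ₁ + γ₀) ⬝ᵥ A.mulVec (γ₁ + γ₀)) = 0 := by linarith
      exact hQiff.mp ((mul_eq_zero.mp this).resolve_left (ne_of_gt hπ1'))
    · intro h; rw [h]; simp
  · -- the decomposition
    -- probability measures on strata
    have hprob : ∀ z, IsProbabilityMeasure (μ[|s z]) := fun z =>
      cond_isProbabilityMeasure (hpos z).ne'
    have hfin : ∀ z, (μ (s z))⁻¹ ≠ ⊤ := fun z => ENNReal.inv_ne_top.mpr (hpos z).ne'
    have hmem : ∀ (f : Ω → ℝ), MemLp f 2 μ → ∀ z, MemLp f 2 (μ[|s z]) := by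
      intro f hf z
      rw [ProbabilityTheory.cond]
      exact (hf.restrict _).smul_measure (hfin z)
    have hXz : ∀ z, MemLp X 2 (μ[|s z]) := by
      intro z
      rw [ProbabilityTheory.cond]
      exact (hX.restrict _).smul_measure (hfin z)
    have hXk : ∀ z k, MemLp (fun ω => X ω k) 2 (μ[|s z]) := fun z k =>
      (hXz z).of_le ((continuous_apply k).comp_aestronglyMeasurable (hXz z).1)
        (ae_of_all _ fun ω => norm_le_pi_norm (X ω) k)
    have hO₁z : ∀ z, MemLp (O₁ z) 2 (μ[|s z]) := fun z => hmem _ (hO₁ z) z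
    have hO₀z : ∀ z, MemLp (O₀ z) 2 (μ[|s z]) := fun z => hmem _ (hO₀ z) z
    -- A maps γⱼ to the weighted covariance vectors
    have hdet : IsUnit A.det := isUnit_iff_ne_zero.mpr (ne_of_gt hApos.det_pos)
    have hAA : A * A⁻¹ = 1 := Matrix.mul_nonsing_inv A hdet
    have hc₁ : A.mulVec γ₁ = ∑ z, (μ (s z)).toReal • covVec (μ[|s z]) X (O₁ z) := by
      rw [hγ₁, Matrix.mulVec_mulVec, hAA, Matrix.one_mulVec]
    have hc₀ : A.mulVec γ₀ = ∑ z, (μ (s z)).toReal • covVec (μ[|s z]) X (O₀ z) := by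
      rw [hγ₀, Matrix.mulVec_mulVec, hAA, Matrix.one_mulVec]
    -- symmetry of the quadratic form
    have hsym : ∀ k l, A l k = A k l := fun k l => by
      simpa using hApos.1.apply k l
    have hswap : ∀ u v : Fin d → ℝ, u ⬝ᵥ A.mulVec v = v ⬝ᵥ A.mulVec u := by
      intro u v
      simp only [dotProduct, Matrix.mulVec, dotProduct, Finset.mul_sum]
      rw [Finset.sum_comm]
      exact Finset.sum_congr rfl fun k _ => Finset.sum_congr rfl fun l _ => by
        rw [hsym k l]; ring
    -- per-stratum decomposition summed up
    have hkey : ∀ z : ι, (μ (s z)).toReal *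
        (π * evar (μ[|s z]) (fun ω => O₁ z ω - ∑ k, X ω k * γ₁ k)
          + (1 - π) * evar (μ[|s z]) (fun ω => O₀ z ω - ∑ k, X ω k * γ₀ k))
      = (μ (s z)).toReal * (π * evar (μ[|s z]) (O₁ z) + (1 - π) * evar (μ[|s z]) (O₀ z))
        - 2 * π * ((μ (s z)).toReal * (γ₁ ⬝ᵥ covVec (μ[|s z]) X (O₁ z)))
        - 2 * (1 - π) * ((μ (s z)).toReal * (γ₀ ⬝ᵥ covVec (μ[|s z]) X (O₀ z)))
        + π * ((μ (s z)).toReal * (γ₁ ⬝ᵥ (covMat (μ[|s z]) X).mulVec γ₁))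
        + (1 - π) * ((μ (s z)).toReal * (γ₀ ⬝ᵥ (covMat (μ[|s z]) X).mulVec γ₀)) := by
      intro z
      haveI := hprob z
      rw [evar_sub_lin (O₁ z) X γ₁ (hO₁z z) (hXk z),
        evar_sub_lin (O₀ z) X γ₀ (hO₀z z) (hXk z)]
      ring
    have hsum : (∑ z, (μ (s z)).toReal *
        (π * evar (μ[|s z]) (fun ω => O₁ z ω - ∑ k, X ω k * γ₁ k)
          + (1 - π) * evar (μ[|s z]) (fun ω => O₀ z ω - ∑ k, X ω k * γ₀ k)))
      = σSL2 - 2 * π * (γ₁ ⬝ᵥ A.mulVec γ₁) - 2 * (1 - π) * (γ₀ ⬝ᵥ A.mulVec γ₀)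
        + π * (γ₁ ⬝ᵥ A.mulVec γ₁) + (1 - π) * (γ₀ ⬝ᵥ A.mulVec γ₀) := by
      rw [Finset.sum_congr rfl fun z _ => hkey z]
      rw [Finset.sum_add_distrib, Finset.sum_add_distrib, Finset.sum_sub_distrib,
        Finset.sum_sub_distrib, ← Finset.mul_sum, ← Finset.mul_sum, ← Finset.mul_sum,
        ← Finset.mul_sum]
      rw [← dot_sum_smul γ₁ _ _, ← dot_sum_smul γ₀ _ _, ← hc₁, ← hc₀, ← hσSL2]
      have hq₁ : (∑ z, (μ (s z)).toReal * (γ₁ ⬝ᵥ (covMat (μ[|s z]) X).mulVec γ₁))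
          = γ₁ ⬝ᵥ A.mulVec γ₁ := by
        rw [hA, dot_sum_smul_mat]
      have hq₀ : (∑ z, (μ (s z)).toReal * (γ₀ ⬝ᵥ (covMat (μ[|s z]) X).mulVec γ₀))
          = γ₀ ⬝ᵥ A.mulVec γ₀ := by
        rw [hA, dot_sum_smul_mat]
      rw [hq₁, hq₀]
    rw [hsum, hσCSL2]
    -- now pure algebra with the quadratic form
    have hexp1 : (γ₁ + γ₀) ⬝ᵥ A.mulVec (γ₁ + γ₀)
        = γ₁ ⬝ᵥ A.mulVec γ₁ + 2 * (γ₁ ⬝ᵥ A.mulVec γ₀) + γ₀ ⬝ᵥ A.mulVec γ₀ := by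
      rw [Matrix.mulVec_add, dotProduct_add, add_dotProduct, add_dotProduct,
        hswap γ₀ γ₁]
      ring
    have hexp2 : (π • γ₁ - (1 - π) • γ₀) ⬝ᵥ A.mulVec (π • γ₁ - (1 - π) • γ₀)
        = π ^ 2 * (γ₁ ⬝ᵥ A.mulVec γ₁) - 2 * π * (1 - π) * (γ₁ ⬝ᵥ A.mulVec γ₀)
          + (1 - π) ^ 2 * (γ₀ ⬝ᵥ A.mulVec γ₀) := by
      simp only [Matrix.mulVec_sub, Matrix.mulVec_smul, dotProduct_sub, sub_dotProduct,
        smul_dotProduct, dotProduct_smul, smul_eq_mul]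
      rw [hswap γ₀ γ₁]
      ring
    rw [hexp1, hexp2]
    ring
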